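/- Let G = Z × R act on F = R ∪ {∞} (the Fort space with particular point ∞, i.e., the one-point compactification of discrete R) by ∞·(n,r) = ∞ and x·(n,r) = x + r for x ∈ R. Then for every x ∈ R, the orbit xG equals R and the stabilizer st(x) equals Z × {0}; consequently (F,G) is Li–Yorke chaotic but is not Li–Yorke chaotic modulo the ideal P_count(G) of countable subsets of G. -/
import Mathlib


open Pointwise

/-- The Fort topology on `F` with particular point `b`: a set is open iff it misses `b`
or has finite complement. -/
def fortTop (F : Type*) (b : F) : TopologicalSpace F where
  IsOpen U := b ∈ U → (Uᶜ : Set F).Finite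
  isOpen_univ := fun _ => by simp
  isOpen_inter := fun U V hU hV h => by
    rw [Set.compl_inter]
    exact (hU h.1).union (hV h.2)
  isOpen_sUnion := fun S hS h => by
    obtain ⟨U, hUS, hbU⟩ := h
    exact (hS U hUS hbU).subset (Set.compl_subset_compl.2 (Set.subset_sUnion_of_mem hUS))

/-- Proximality in a transformation semigroup (via a net encoded as a nontrivial filter). -/
def ProxPair (S X : Type*) [TopologicalSpace X] [SMul S X] (x y : X) : Prop :=
  ∃ z : X, ∃ l : Filter S, l.NeBot ∧
    Filter.Tendsto (fun s => s • x) l (nhds z) ∧ Filter.Tendsto (fun s => s • y) l (nhds z)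

/-- The basic entourage `α_D = ((F∖D) × (F∖D)) ∪ Δ_D` of the Fort uniformity. -/
def fortEntourage (F : Type*) (D : Set F) : Set (F × F) :=
  (Dᶜ ×ˢ Dᶜ) ∪ {p : F × F | p.1 ∈ D ∧ p.1 = p.2}

/-- Asymptoticity modulo an ideal `I` in a Fort transformation group `(F,G)`, expressed via
the generating entourages `α_D` (finite `D ⊆ F∖{b}`) of the unique uniformity of the Fort
space `F` with particular point `b`. -/
def FortAsymMod (G F : Type*) [SMul G F] (b : F) (I : Set (Set G)) (x y : F) : Prop :=
  ∀ D : Set F, D.Finite → b ∉ D → {g : G | (g • x, g • y) ∉ fortEntourage F D} ∈ I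

/-- The group `G = ℤ × ℝ` (written multiplicatively) acting on `F = ℝ ∪ {∞}` by
`∞·(n,r) = ∞` and `x·(n,r) = x + r`. -/
instance : SMul (Multiplicative (ℤ × ℝ)) (Option ℝ) :=
  ⟨fun g x => x.map fun r => r + (Multiplicative.toAdd g).2⟩

instance : MulAction (Multiplicative (ℤ × ℝ)) (Option ℝ) where
  one_smul x := by
    cases x <;> simp [HSMul.hSMul, SMul.smul]
  mul_smul g h x := by
    cases x <;> simp [HSMul.hSMul, SMul.smul] <;> ring

/-- For the action of `G = ℤ × ℝ` on the Fort space `F = ℝ ∪ {∞}` with particular point `∞`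
by translations in the second coordinate: each orbit of a real point is all of `ℝ`, each
stabilizer is `ℤ × {0}`; consequently `(F,G)` is Li–Yorke chaotic (modulo the ideal of finite
subsets of `G`) but not Li–Yorke chaotic modulo the ideal of countable subsets of `G`. -/
lemma smul_some' (g : Multiplicative (ℤ × ℝ)) (a : ℝ) :
    g • (some a : Option ℝ) = some (a + (Multiplicative.toAdd g).2) := rfl

lemma smul_none' (g : Multiplicative (ℤ × ℝ)) :
    g • (none : Option ℝ) = none := rfl

lemma countable_fiber (T : Set ℝ) (hT : T.Countable) :
    {g : Multiplicative (ℤ × ℝ) | (Multiplicative.toAdd g).2 ∈ T}.Countable := by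
  have hsub : {g : Multiplicative (ℤ × ℝ) | (Multiplicative.toAdd g).2 ∈ T}
      ⊆ ⋃ t ∈ T, Set.range (fun n : ℤ => Multiplicative.ofAdd ((n, t) : ℤ × ℝ)) := by
    intro g hg
    exact Set.mem_biUnion hg ⟨(Multiplicative.toAdd g).1, by simp⟩
  exact ((hT.biUnion fun t _ => Set.countable_range _)).mono hsub

lemma asym_count (x y : Option ℝ) :
    FortAsymMod (Multiplicative (ℤ × ℝ)) (Option ℝ) none
      {A : Set (Multiplicative (ℤ × ℝ)) | A.Countable} x y := by
  intro D hD hbD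
  have key : ∀ z : Option ℝ, {g : Multiplicative (ℤ × ℝ) | g • z ∈ D}.Countable := by
    intro z
    cases z with
    | none =>
      have : {g : Multiplicative (ℤ × ℝ) | g • (none : Option ℝ) ∈ D} = ∅ := by
        ext g; simp [smul_none', hbD]
      simp [this]
    | some a =>
      have hfin : {t : ℝ | (some (a + t) : Option ℝ) ∈ D}.Finite := by
        have : {t : ℝ | (some (a + t) : Option ℝ) ∈ D}
            = (fun t : ℝ => (some (a + t) : Option ℝ)) ⁻¹' D := rfl
        rw [this]
        exact hD.preimage (fun s _ t _ h => by
          have : a + s = a + t := Option.some_injective _ h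
          linarith)
      have : {g : Multiplicative (ℤ × ℝ) | g • (some a : Option ℝ) ∈ D}
          = {g : Multiplicative (ℤ × ℝ) | (Multiplicative.toAdd g).2 ∈ {t | (some (a + t) : Option ℝ) ∈ D}} := rfl
      rw [this]
      exact countable_fiber _ hfin.countable
  have hsub : {g : Multiplicative (ℤ × ℝ) | (g • x, g • y) ∉ fortEntourage (Option ℝ) D}
      ⊆ {g | g • x ∈ D} ∪ {g | g • y ∈ D} := by
    intro g hg
    by_contra h
    simp only [Set.mem_union, Set.mem_setOf_eq, not_or] at h
    exact hg (Or.inl ⟨h.1, h.2⟩)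
  exact ((key x).union (key y)).mono hsub


lemma tendsto_none_smul (x : Option ℝ) :
    @Filter.Tendsto ℝ (Option ℝ)
      (fun r => (Multiplicative.ofAdd ((0 : ℤ), r)) • x) Filter.atTop
      (@nhds _ (fortTop (Option ℝ) none) none) := by
  letI := fortTop (Option ℝ) none
  cases x with
  | none => simpa [smul_none'] using (tendsto_const_nhds :
      Filter.Tendsto (fun _ : ℝ => (none : Option ℝ)) Filter.atTop (nhds none))
  | some a =>
    rw [tendsto_nhds]
    intro U hU hnU
    have hUc : (Uᶜ : Set (Option ℝ)).Finite := hU hnU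
    have hfin : {r : ℝ | (some (a + r) : Option ℝ) ∈ Uᶜ}.Finite := by
      have : {r : ℝ | (some (a + r) : Option ℝ) ∈ Uᶜ}
          = (fun r : ℝ => (some (a + r) : Option ℝ)) ⁻¹' Uᶜ := rfl
      rw [this]
      exact hUc.preimage (fun s _ t _ h => by
        have : a + s = a + t := Option.some_injective _ h
        linarith)
    obtain ⟨M, hM⟩ := hfin.bddAbove
    filter_upwards [Filter.eventually_gt_atTop M] with r hr
    by_contra h
    exact absurd (hM h) (not_le.2 hr)

lemma prox_pair (x y : Option ℝ) :
    @ProxPair (Multiplicative (ℤ × ℝ)) (Option ℝ) (fortTop (Option ℝ) none) _ x y := by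
  refine ⟨none, Filter.map (fun r : ℝ => Multiplicative.ofAdd (((0:ℤ), r) : ℤ × ℝ))
    Filter.atTop, Filter.map_neBot, ?_, ?_⟩ <;>
  · rw [Filter.tendsto_map'_iff]
    first
    | exact tendsto_none_smul x
    | exact tendsto_none_smul y

lemma not_asym_fin {a b : ℝ} (hab : a ≠ b) :
    ¬ FortAsymMod (Multiplicative (ℤ × ℝ)) (Option ℝ) none
        {A : Set (Multiplicative (ℤ × ℝ)) | A.Finite} (some a) (some b) := by
  intro h
  have hfin := h {some a} (Set.finite_singleton _) (by simp)
  have hinf : {g : Multiplicative (ℤ × ℝ) |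
      (g • (some a : Option ℝ), g • (some b : Option ℝ)) ∉
        fortEntourage (Option ℝ) {some a}}.Infinite := by
    have hinj : Function.Injective (fun n : ℤ => Multiplicative.ofAdd ((n, (0:ℝ)) : ℤ × ℝ)) := by
      intro m n hmn
      simpa using congrArg (fun g => (Multiplicative.toAdd g).1) hmn
    refine Set.infinite_of_injective_forall_mem hinj fun n => ?_
    simp [fortEntourage, smul_some', hab]
  exact hinf hfin

theorem stmt18 :
    (∀ x : ℝ, MulAction.orbit (Multiplicative (ℤ × ℝ)) (some x : Option ℝ) =
      {y : Option ℝ | ∃ r : ℝ, y = some r}) ∧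
    (∀ x : ℝ, (MulAction.stabilizer (Multiplicative (ℤ × ℝ)) (some x : Option ℝ) :
        Set (Multiplicative (ℤ × ℝ))) = {g | (Multiplicative.toAdd g).2 = 0}) ∧
    (∃ D : Set (Option ℝ), ¬ D.Countable ∧ ∀ x ∈ D, ∀ y ∈ D, x ≠ y →
        @ProxPair (Multiplicative (ℤ × ℝ)) (Option ℝ) (fortTop (Option ℝ) none) _ x y ∧
        ¬ FortAsymMod (Multiplicative (ℤ × ℝ)) (Option ℝ) none
            {A : Set (Multiplicative (ℤ × ℝ)) | A.Finite} x y) ∧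
    ¬ (∃ D : Set (Option ℝ), ¬ D.Countable ∧ ∀ x ∈ D, ∀ y ∈ D, x ≠ y →
        @ProxPair (Multiplicative (ℤ × ℝ)) (Option ℝ) (fortTop (Option ℝ) none) _ x y ∧
        ¬ FortAsymMod (Multiplicative (ℤ × ℝ)) (Option ℝ) none
            {A : Set (Multiplicative (ℤ × ℝ)) | A.Countable} x y) := by
  refine ⟨?_, ?_, ?_, ?_⟩
  · intro x
    ext y
    constructor
    · rintro ⟨g, rfl⟩
      exact ⟨x + (Multiplicative.toAdd g).2, rfl⟩
    · rintro ⟨r, rfl⟩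
      exact ⟨Multiplicative.ofAdd ((0 : ℤ), r - x), by simp [smul_some']⟩
  · intro x
    ext g
    simp only [SetLike.mem_coe, MulAction.mem_stabilizer_iff, smul_some',
      Set.mem_setOf_eq, Option.some.injEq]
    constructor
    · intro h; linarith
    · intro h; rw [h]; ring
  · refine ⟨Set.range (some : ℝ → Option ℝ), ?_, ?_⟩
    · intro h
      have := h.preimage (Option.some_injective ℝ)
      rw [Set.preimage_range] at this
      exact Cardinal.not_countable_real this
    · rintro x ⟨a, rfl⟩ y ⟨b, rfl⟩ hxy
      have hab : a ≠ b := fun h => hxy (by rw [h])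
      exact ⟨prox_pair _ _, not_asym_fin hab⟩
  · rintro ⟨D, hDc, hpairs⟩
    have hnt : D.Nontrivial := by
      rw [← Set.not_subsingleton_iff]
      exact fun h => hDc h.countable
    obtain ⟨x, hx, y, hy, hxy⟩ := hnt
    exact (hpairs x hx y hy hxy).2 (asym_count x y)
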